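/- Let $\Delta : (0,\infty) \to [0,\infty)$ be measurable, bounded, and vanishing for large $x$, and set $V(t) = t\int_0^\infty e^{-tx}\Delta(x)\,dx$ and $D(x) = \int_0^x \Delta(u)\,du$. Then for $v \ge 0$: $\lim_{t\to\infty} V(t) = v$ if and only if $\lim_{x\downarrow0} D(x)/x = v$. -/

import Mathlib

set_option maxHeartbeats 1000000
set_option linter.unusedSectionVars false

open Real Set Filter MeasureTheory

section Aux
variable {Δ : ℝ → ℝ} (hmeas : Measurable Δ) (hnonneg : ∀ x : ℝ, 0 ≤ Δ x)
  {C X : ℝ} (hC : ∀ x : ℝ, 0 < x → Δ x ≤ C) (hX : 0 < X)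
  (hvan : ∀ x : ℝ, X ≤ x → Δ x = 0)
include hmeas hnonneg hC hX hvan

theorem aux_int_mul (g : ℝ → ℝ) (hg : Measurable g) (hgb : ∀ x ∈ Ioi (0:ℝ), |g x| ≤ 1) :
    IntegrableOn (fun x => g x * Δ x) (Ioi (0:ℝ)) := by
  have hC0 : 0 ≤ C := le_trans (hnonneg X) (hC X hX)
  have hbint : Integrable ((Ioc (0:ℝ) X).indicator (fun _ => C))
      (volume.restrict (Ioi (0:ℝ))) := by
    rw [integrable_indicator_iff measurableSet_Ioc]
    exact integrableOn_const (ne_of_lt (by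
      rw [Measure.restrict_apply measurableSet_Ioc]
      exact lt_of_le_of_lt (measure_mono Set.inter_subset_left) measure_Ioc_lt_top))
  refine Integrable.mono' hbint ((hg.mul hmeas).aestronglyMeasurable) ?_
  rw [ae_restrict_iff' measurableSet_Ioi]
  refine Eventually.of_forall fun x hx => ?_
  have hx0 : (0:ℝ) < x := hx
  by_cases hxX : x ≤ X
  · have : (Ioc (0:ℝ) X).indicator (fun _ => C) x = C :=
      Set.indicator_of_mem (show x ∈ Ioc (0:ℝ) X from ⟨hx0, hxX⟩) _
    rw [this, Real.norm_eq_abs, abs_mul, abs_of_nonneg (hnonneg x)]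
    calc |g x| * Δ x ≤ 1 * Δ x := mul_le_mul_of_nonneg_right (hgb x hx) (hnonneg x)
      _ = Δ x := one_mul _
      _ ≤ C := hC x hx0
  · have h0 : Δ x = 0 := hvan x (le_of_not_ge hxX)
    have : (Ioc (0:ℝ) X).indicator (fun _ => C) x = 0 := by
      rw [Set.indicator_of_notMem (fun h => hxX h.2)]
    rw [this, h0, mul_zero, norm_zero]

theorem aux_int : IntegrableOn Δ (Ioi (0:ℝ)) := by
  have := aux_int_mul hmeas hnonneg hC hX hvan (fun _ => 1) measurable_const
    (fun x _ => by norm_num)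
  simpa using this

omit hmeas hC hX hvan in
theorem aux_Dnn (x : ℝ) : 0 ≤ ∫ u in Ioc (0:ℝ) x, Δ u :=
  setIntegral_nonneg measurableSet_Ioc fun u _ => hnonneg u

theorem aux_Dmono : Monotone (fun x => ∫ u in Ioc (0:ℝ) x, Δ u) := by
  intro x y hxy
  exact setIntegral_mono_set
    ((aux_int hmeas hnonneg hC hX hvan).mono_set Ioc_subset_Ioi_self)
    (Eventually.of_forall fun u => hnonneg u)
    (HasSubset.Subset.eventuallyLE (Ioc_subset_Ioc_right hxy))

theorem aux_Dle (x : ℝ) (hx : 0 ≤ x) : (∫ u in Ioc (0:ℝ) x, Δ u) ≤ C * x := by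
  have h1 : (∫ u in Ioc (0:ℝ) x, Δ u) ≤ ∫ _ in Ioc (0:ℝ) x, C :=
    setIntegral_mono_on
      ((aux_int hmeas hnonneg hC hX hvan).mono_set Ioc_subset_Ioi_self)
      (integrableOn_const measure_Ioc_lt_top.ne)
      measurableSet_Ioc (fun u hu => hC u hu.1)
  calc (∫ u in Ioc (0:ℝ) x, Δ u) ≤ ∫ _ in Ioc (0:ℝ) x, C := h1
    _ = C * x := by
        rw [setIntegral_const, Real.volume_real_Ioc_of_le hx, smul_eq_mul,
          sub_zero, mul_comm]

omit hmeas hnonneg hC hX hvan in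
theorem aux_D_indicator (b : ℝ) :
    (∫ u in Ioc (0:ℝ) b, Δ u) = ∫ x in Ioi (0:ℝ), (Ioc (0:ℝ) b).indicator Δ x := by
  rw [integral_indicator measurableSet_Ioc, Measure.restrict_restrict measurableSet_Ioc,
    Set.inter_eq_left.2 Ioc_subset_Ioi_self]


theorem aux_fubini {t : ℝ} (ht : 0 < t) :
    (∫ s in Ioi (0:ℝ), Real.exp (-s) * ∫ u in Ioc (0:ℝ) (s/t), Δ u)
      = ∫ u in Ioi (0:ℝ), Real.exp (-(t*u)) * Δ u := by
  have hC0 : 0 ≤ C := le_trans (hnonneg X) (hC X hX)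
  set F2 : ℝ × ℝ → ℝ :=
    ({q : ℝ × ℝ | t * q.2 ≤ q.1}).indicator (fun q => Real.exp (-q.1) * Δ q.2) with hF2
  have hsmeas : MeasurableSet {q : ℝ × ℝ | t * q.2 ≤ q.1} :=
    measurableSet_le (measurable_snd.const_mul t) measurable_fst
  have hF2meas : Measurable F2 :=
    ((measurable_fst.neg.exp).mul (hmeas.comp measurable_snd)).indicator hsmeas
  have hFint : Integrable F2
      ((volume.restrict (Ioi (0:ℝ))).prod (volume.restrict (Ioi (0:ℝ)))) := by
    have hbint : Integrable
        (fun p : ℝ × ℝ => Real.exp (-p.1) * ((Ioc (0:ℝ) X).indicator (fun _ => C) p.2))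
        ((volume.restrict (Ioi (0:ℝ))).prod (volume.restrict (Ioi (0:ℝ)))) := by
      have h1 : Integrable (fun s : ℝ => Real.exp (-s)) (volume.restrict (Ioi (0:ℝ))) := by
        have := exp_neg_integrableOn_Ioi (0:ℝ) (zero_lt_one)
        exact this.congr_fun (fun x _ => by norm_num) measurableSet_Ioi
      have h2 : Integrable ((Ioc (0:ℝ) X).indicator (fun _ => C))
          (volume.restrict (Ioi (0:ℝ))) := by
        rw [integrable_indicator_iff measurableSet_Ioc]
        exact integrableOn_const (ne_of_lt (by
          rw [Measure.restrict_apply measurableSet_Ioc]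
          exact lt_of_le_of_lt (measure_mono Set.inter_subset_left) measure_Ioc_lt_top))
      exact h1.mul_prod h2
    refine Integrable.mono' hbint hF2meas.aestronglyMeasurable ?_
    rw [Measure.prod_restrict, ae_restrict_iff' (measurableSet_Ioi.prod measurableSet_Ioi)]
    refine Eventually.of_forall fun p hp => ?_
    obtain ⟨hs, hu⟩ := hp
    have hs : (0:ℝ) < p.1 := hs
    have hu : (0:ℝ) < p.2 := hu
    have hΔle : Δ p.2 ≤ (Ioc (0:ℝ) X).indicator (fun _ => C) p.2 := by
      by_cases hxX : p.2 ≤ X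
      · rw [Set.indicator_of_mem (show p.2 ∈ Ioc (0:ℝ) X from ⟨hu, hxX⟩)]
        exact hC _ hu
      · rw [Set.indicator_of_notMem (fun h => hxX h.2), hvan _ (le_of_not_ge hxX)]
    have hnorm : ‖F2 p‖ ≤ Real.exp (-p.1) * Δ p.2 := by
      rw [hF2]
      by_cases hmem : p ∈ {q : ℝ × ℝ | t * q.2 ≤ q.1}
      · rw [Set.indicator_of_mem hmem, Real.norm_eq_abs,
          abs_of_nonneg (mul_nonneg (Real.exp_nonneg _) (hnonneg _))]
      · rw [Set.indicator_of_notMem hmem, norm_zero]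
        exact mul_nonneg (Real.exp_nonneg _) (hnonneg _)
    exact le_trans hnorm (mul_le_mul_of_nonneg_left hΔle (Real.exp_nonneg _))
  have hswap : (∫ s in Ioi (0:ℝ), ∫ u in Ioi (0:ℝ), F2 (s, u))
      = ∫ u in Ioi (0:ℝ), ∫ s in Ioi (0:ℝ), F2 (s, u) := by
    have := MeasureTheory.integral_integral_swap
      (f := fun s u => F2 (s, u))
      (μ := volume.restrict (Ioi (0:ℝ))) (ν := volume.restrict (Ioi (0:ℝ)))
      (by exact hFint)
    exact this
  have hleft : (∫ s in Ioi (0:ℝ), ∫ u in Ioi (0:ℝ), F2 (s, u))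
      = ∫ s in Ioi (0:ℝ), Real.exp (-s) * ∫ u in Ioc (0:ℝ) (s/t), Δ u := by
    refine setIntegral_congr_fun measurableSet_Ioi fun s hs => ?_
    have hs : (0:ℝ) < s := hs
    have h1 : ∀ u ∈ Ioi (0:ℝ), F2 (s, u) = Real.exp (-s) * (Ioc (0:ℝ) (s/t)).indicator Δ u := by
      intro u hu
      have hu : (0:ℝ) < u := hu
      rw [hF2]
      by_cases hle : t * u ≤ s
      · rw [Set.indicator_of_mem (show (s,u) ∈ _ from hle),
          Set.indicator_of_mem (show u ∈ Ioc (0:ℝ) (s/t) from ⟨hu, (le_div_iff₀ ht).2 (by linarith [hle])⟩)]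
      · rw [Set.indicator_of_notMem (show (s,u) ∉ {q : ℝ × ℝ | t * q.2 ≤ q.1} from fun h => hle h),
          Set.indicator_of_notMem (show u ∉ Ioc (0:ℝ) (s/t) from ?_), mul_zero]
        intro h
        have := h.2
        rw [le_div_iff₀ ht] at this
        exact hle (by linarith [this])
    rw [setIntegral_congr_fun measurableSet_Ioi h1, MeasureTheory.integral_const_mul,
      ← aux_D_indicator (Δ := Δ)]
  have hright : (∫ u in Ioi (0:ℝ), ∫ s in Ioi (0:ℝ), F2 (s, u))
      = ∫ u in Ioi (0:ℝ), Real.exp (-(t*u)) * Δ u := by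
    refine setIntegral_congr_fun measurableSet_Ioi fun u hu => ?_
    have hu : (0:ℝ) < u := hu
    have h1 : ∀ s : ℝ, F2 (s, u) = (Ici (t*u)).indicator (fun s => Real.exp (-s) * Δ u) s := by
      intro s
      rw [hF2]
      by_cases hle : t * u ≤ s
      · rw [Set.indicator_of_mem (show (s,u) ∈ {q : ℝ × ℝ | t * q.2 ≤ q.1} from hle),
          Set.indicator_of_mem (show s ∈ Ici (t*u) from hle)]
      · rw [Set.indicator_of_notMem (show (s,u) ∉ {q : ℝ × ℝ | t * q.2 ≤ q.1} from fun h => hle h),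
          Set.indicator_of_notMem (show s ∉ Ici (t*u) from hle)]
    have htu : (0:ℝ) < t * u := mul_pos ht hu
    calc (∫ s in Ioi (0:ℝ), F2 (s, u))
        = ∫ s in Ioi (0:ℝ), (Ici (t*u)).indicator (fun s => Real.exp (-s) * Δ u) s :=
          setIntegral_congr_fun measurableSet_Ioi fun s _ => h1 s
      _ = ∫ s in Ici (t*u), Real.exp (-s) * Δ u := by
          have hsub : Ici (t*u) ∩ Ioi (0:ℝ) = Ici (t*u) :=
            Set.inter_eq_left.2 (fun s hs => lt_of_lt_of_le htu hs)
          rw [integral_indicator measurableSet_Ici, Measure.restrict_restrict measurableSet_Ici,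
            hsub]
      _ = (∫ s in Ici (t*u), Real.exp (-s)) * Δ u := by rw [integral_mul_const]
      _ = Real.exp (-(t*u)) * Δ u := by
          rw [integral_Ici_eq_integral_Ioi, integral_exp_neg_Ioi]
  rw [← hleft, hswap, hright]

theorem aux_abelian {v : ℝ}
    (hB : Tendsto (fun x => (∫ u in Ioc (0:ℝ) x, Δ u) / x) (nhdsWithin (0:ℝ) (Ioi 0)) (nhds v)) :
    Tendsto (fun t => t * ∫ x in Ioi (0:ℝ), Real.exp (-(t*x)) * Δ x) atTop (nhds v) := by
  have hC0 : 0 ≤ C := le_trans (hnonneg X) (hC X hX)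
  set Df : ℝ → ℝ := fun x => ∫ u in Ioc (0:ℝ) x, Δ u with hDf
  have hDfmeas : Measurable Df := (aux_Dmono hmeas hnonneg hC hX hvan).measurable
  have hkey : ∀ t : ℝ, 0 < t →
      t * (∫ x in Ioi (0:ℝ), Real.exp (-(t*x)) * Δ x)
        = ∫ s in Ioi (0:ℝ), Real.exp (-s) * (t * Df (s/t)) := by
    intro t ht
    rw [← aux_fubini hmeas hnonneg hC hX hvan ht, ← MeasureTheory.integral_const_mul]
    refine setIntegral_congr_fun measurableSet_Ioi fun s _ => ?_
    ring
  have hval : (∫ s in Ioi (0:ℝ), Real.exp (-s) * (v * s)) = v := by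
    have h2 : (∫ s in Ioi (0:ℝ), Real.exp (-s) * s) = 1 := by
      have hG := (Real.Gamma_eq_integral (by norm_num : (0:ℝ) < 2)).symm
      rw [show ((2:ℝ) - 1) = 1 by norm_num] at hG
      calc (∫ s in Ioi (0:ℝ), Real.exp (-s) * s)
          = ∫ s in Ioi (0:ℝ), Real.exp (-s) * s ^ (1:ℝ) := by
            refine setIntegral_congr_fun measurableSet_Ioi fun s _ => ?_
            rw [Real.rpow_one]
        _ = Real.Gamma 2 := hG
        _ = 1 := Real.Gamma_two
    calc (∫ s in Ioi (0:ℝ), Real.exp (-s) * (v * s))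
        = ∫ s in Ioi (0:ℝ), v * (Real.exp (-s) * s) := by
          refine setIntegral_congr_fun measurableSet_Ioi fun s _ => by ring
      _ = v * ∫ s in Ioi (0:ℝ), Real.exp (-s) * s := MeasureTheory.integral_const_mul v _
      _ = v := by rw [h2, mul_one]
  have hDCT : Tendsto (fun t : ℝ => ∫ s in Ioi (0:ℝ), Real.exp (-s) * (t * Df (s/t)))
      atTop (nhds v) := by
    rw [← hval]
    refine tendsto_integral_filter_of_dominated_convergence
      (fun s => Real.exp (-s) * (C * s)) ?_ ?_ ?_ ?_
    · refine Eventually.of_forall fun t => ?_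
      exact ((measurable_id.neg.exp).mul
        ((hDfmeas.comp (measurable_id.div_const t)).const_mul t)).aestronglyMeasurable
    · filter_upwards [eventually_ge_atTop (1:ℝ)] with t ht
      rw [ae_restrict_iff' measurableSet_Ioi]
      refine Eventually.of_forall fun s hs => ?_
      have hs : (0:ℝ) < s := hs
      have ht0 : (0:ℝ) < t := lt_of_lt_of_le zero_lt_one ht
      have hst : (0:ℝ) ≤ s / t := le_of_lt (div_pos hs ht0)
      have hDnn' : 0 ≤ Df (s/t) := aux_Dnn hnonneg _
      rw [Real.norm_eq_abs, abs_of_nonneg (mul_nonneg (Real.exp_nonneg _)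
        (mul_nonneg (le_of_lt ht0) hDnn'))]
      refine mul_le_mul_of_nonneg_left ?_ (Real.exp_nonneg _)
      calc t * Df (s/t) ≤ t * (C * (s/t)) :=
            mul_le_mul_of_nonneg_left (aux_Dle hmeas hnonneg hC hX hvan _ hst) (le_of_lt ht0)
        _ = C * s := by field_simp
    · have h1 : IntegrableOn (fun x : ℝ => C * (Real.exp (-x) * x ^ ((2:ℝ)-1))) (Ioi 0) :=
        (Real.GammaIntegral_convergent (by norm_num : (0:ℝ) < 2)).const_mul C
      refine h1.congr_fun (fun x hx => ?_) measurableSet_Ioi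
      simp only [show ((2:ℝ) - 1) = 1 by norm_num, Real.rpow_one]
      ring
    · rw [ae_restrict_iff' measurableSet_Ioi]
      refine Eventually.of_forall fun s hs => ?_
      have hs : (0:ℝ) < s := hs
      have h1 : Tendsto (fun t : ℝ => s / t) atTop (nhdsWithin (0:ℝ) (Ioi 0)) := by
        rw [tendsto_nhdsWithin_iff]
        constructor
        · have := tendsto_inv_atTop_zero (𝕜 := ℝ)
          have h2 := this.const_mul s
          rw [mul_zero] at h2
          refine h2.congr fun t => ?_
          rw [div_eq_mul_inv]
        · filter_upwards [eventually_gt_atTop (0:ℝ)] with t ht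
          exact div_pos hs ht
      have h2 : Tendsto (fun t : ℝ => Real.exp (-s) * (s * (Df (s/t) / (s/t))))
          atTop (nhds (Real.exp (-s) * (s * v))) :=
        (((hB.comp h1).const_mul s).const_mul (Real.exp (-s)))
      have h3 : (fun t : ℝ => Real.exp (-s) * (s * (Df (s/t) / (s/t))))
          =ᶠ[atTop] fun t : ℝ => Real.exp (-s) * (t * Df (s/t)) := by
        filter_upwards [eventually_gt_atTop (0:ℝ)] with t ht
        have hst : s / t ≠ 0 := ne_of_gt (div_pos hs ht)
        have hs0 : s ≠ 0 := ne_of_gt hs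
        have ht0 : t ≠ 0 := ne_of_gt ht
        congr 1
        field_simp
      have := h2.congr' h3
      rw [show Real.exp (-s) * (s * v) = Real.exp (-s) * (v * s) by ring] at this
      exact this
  refine hDCT.congr' ?_
  filter_upwards [eventually_gt_atTop (0:ℝ)] with t ht
  exact (hkey t ht).symm

end Aux

theorem sandwich_polys {ε : ℝ} (hε : 0 < ε) :
    ∃ pl pu : Polynomial ℝ,
      (∀ y ∈ Icc (0:ℝ) 1, Polynomial.eval y pl ≤ (if Real.exp (-1) ≤ y then 1/y else 0)) ∧
      (∀ y ∈ Icc (0:ℝ) 1, (if Real.exp (-1) ≤ y then 1/y else 0) ≤ Polynomial.eval y pu) ∧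
      (∫ y in (0:ℝ)..1, Polynomial.eval y pu) ≤ 1 + ε ∧
      1 - ε ≤ ∫ y in (0:ℝ)..1, Polynomial.eval y pl := by
  set a : ℝ := Real.exp (-1) with ha
  have ha0 : 0 < a := Real.exp_pos _
  have ha1 : a < 1 := Real.exp_lt_one_iff.2 (by norm_num)
  have haloga : Real.log a = -1 := Real.log_exp _
  have hahalf : a < 1/2 := by
    have h2 : (2:ℝ) < Real.exp 1 := by
      have := Real.exp_one_gt_d9; linarith
    have : a = (Real.exp 1)⁻¹ := by rw [ha, Real.exp_neg]
    rw [this]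
    rw [show (1:ℝ)/2 = (2:ℝ)⁻¹ by norm_num]
    exact inv_strictAnti₀ (by norm_num) h2
  set η : ℝ := min (a/2) (ε * a / 8) with hη
  have hη0 : 0 < η := lt_min (by linarith) (by positivity)
  have hηa : η ≤ a/2 := min_le_left _ _
  have hηε : η ≤ ε * a / 8 := min_le_right _ _
  have haη : 0 < a - η := by linarith
  have haη1 : a + η ≤ 1 := by linarith
  set ε' : ℝ := ε / 4 with hε'
  have hε'0 : 0 < ε' := by positivity
  set Gp : ℝ → ℝ := fun y => (min 1 (max 0 ((y - (a - η))/η))) * (max y (a - η))⁻¹ with hGp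
  set Gm : ℝ → ℝ := fun y => (min 1 (max 0 ((y - a)/η))) * (max y a)⁻¹ with hGm
  have hGpc : Continuous Gp := by
    refine Continuous.mul ?_ (Continuous.inv₀ (continuous_id.max continuous_const) ?_)
    · exact continuous_const.min (continuous_const.max ((continuous_id.sub continuous_const).div_const η))
    · intro y
      exact ne_of_gt (lt_of_lt_of_le haη (le_max_right _ _))
  have hGmc : Continuous Gm := by
    refine Continuous.mul ?_ (Continuous.inv₀ (continuous_id.max continuous_const) ?_)
    · exact continuous_const.min (continuous_const.max ((continuous_id.sub continuous_const).div_const η))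
    · intro y
      exact ne_of_gt (lt_of_lt_of_le ha0 (le_max_right _ _))
  -- pointwise facts
  have hGp_eq : ∀ y : ℝ, a ≤ y → Gp y = 1/y := by
    intro y hy
    simp only [hGp]
    have h1 : min (1:ℝ) (max 0 ((y - (a - η))/η)) = 1 := by
      refine min_eq_left (le_max_of_le_right ?_)
      rw [le_div_iff₀ hη0]
      linarith
    have h2 : max y (a - η) = y := max_eq_left (by linarith)
    simp only [h1, h2, one_mul, one_div]
  have hGp_nonneg : ∀ y : ℝ, 0 ≤ Gp y := by
    intro y
    refine mul_nonneg (le_min zero_le_one (le_max_left _ _)) ?_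
    · have : (0:ℝ) < max y (a - η) := lt_of_lt_of_le haη (le_max_right _ _)
      positivity
  have hGm_eq0 : ∀ y : ℝ, y ≤ a → Gm y = 0 := by
    intro y hy
    simp only [hGm]
    have h1 : max (0:ℝ) ((y - a)/η) = 0 :=
      max_eq_left (div_nonpos_iff.2 (Or.inr ⟨by linarith, le_of_lt hη0⟩))
    rw [h1, min_eq_right (le_of_lt zero_lt_one), zero_mul]
  have hGm_eq : ∀ y : ℝ, a + η ≤ y → Gm y = 1/y := by
    intro y hy
    simp only [hGm]
    have h1 : min (1:ℝ) (max 0 ((y - a)/η)) = 1 := by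
      refine min_eq_left (le_max_of_le_right ?_)
      rw [le_div_iff₀ hη0]
      linarith
    have h2 : max y a = y := max_eq_left (by linarith)
    rw [h1, h2, one_mul, one_div]
  have hGm_le : ∀ y ∈ Icc (0:ℝ) 1, Gm y ≤ (if a ≤ y then 1/y else 0) := by
    intro y hy
    by_cases hay : a ≤ y
    · rw [if_pos hay]
      simp only [hGm]
      have hy0 : 0 < y := lt_of_lt_of_le ha0 hay
      have h2 : max y a = y := max_eq_left hay
      rw [h2, one_div]
      refine mul_le_of_le_one_left (by positivity) (min_le_left _ _)
    · rw [if_neg hay, hGm_eq0 y (le_of_not_ge hay)]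
  have hGp_ge : ∀ y ∈ Icc (0:ℝ) 1, (if a ≤ y then 1/y else 0) ≤ Gp y := by
    intro y hy
    by_cases hay : a ≤ y
    · rw [if_pos hay, hGp_eq y hay]
    · rw [if_neg hay]
      exact hGp_nonneg y
  -- integral of Gp
  have hIGp : (∫ y in (0:ℝ)..1, Gp y) ≤ 1 + ε/4 := by
    have hint1 : IntervalIntegrable Gp volume 0 (a - η) := hGpc.intervalIntegrable _ _
    have hint2 : IntervalIntegrable Gp volume (a - η) a := hGpc.intervalIntegrable _ _
    have hint3 : IntervalIntegrable Gp volume a 1 := hGpc.intervalIntegrable _ _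
    have hsplit : (∫ y in (0:ℝ)..1, Gp y)
        = (∫ y in (0:ℝ)..(a-η), Gp y) + (∫ y in (a-η)..a, Gp y) + ∫ y in a..(1:ℝ), Gp y := by
      rw [intervalIntegral.integral_add_adjacent_intervals hint1 hint2,
        intervalIntegral.integral_add_adjacent_intervals (hint1.trans hint2) hint3]
    have hp1 : (∫ y in (0:ℝ)..(a-η), Gp y) = 0 := by
      have : EqOn Gp (fun _ => (0:ℝ)) (uIcc 0 (a - η)) := by
        intro y hy
        rw [uIcc_of_le (le_of_lt haη)] at hy
        simp only [hGp]
        have h1 : max (0:ℝ) ((y - (a - η))/η) = 0 :=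
          max_eq_left (div_nonpos_iff.2 (Or.inr ⟨by linarith [hy.2], le_of_lt hη0⟩))
        simp only [h1, min_eq_right (le_of_lt zero_lt_one), zero_mul]
      rw [intervalIntegral.integral_congr this, intervalIntegral.integral_zero]
    have hp2 : (∫ y in (a-η)..a, Gp y) ≤ ε/4 := by
      have hmono : (∫ y in (a-η)..a, Gp y) ≤ ∫ _ in (a-η)..a, (a-η)⁻¹ := by
        refine intervalIntegral.integral_mono_on (by linarith) hint2
          (intervalIntegrable_const) ?_
        intro y hy
        simp only [hGp]
        calc (min 1 (max 0 ((y - (a - η))/η))) * (max y (a - η))⁻¹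
            ≤ 1 * (a - η)⁻¹ := by
              refine mul_le_mul (min_le_left _ _) ?_ ?_ zero_le_one
              · exact inv_anti₀ haη (le_max_right _ _)
              · have : (0:ℝ) < max y (a - η) := lt_of_lt_of_le haη (le_max_right _ _)
                positivity
          _ = (a - η)⁻¹ := one_mul _
      rw [intervalIntegral.integral_const, smul_eq_mul] at hmono
      have h3 : (a - (a - η)) * (a - η)⁻¹ ≤ ε/4 := by
        have h4 : a - (a - η) = η := by ring
        rw [h4]
        have h5 : (a - η)⁻¹ ≤ 2/a := by
          rw [show (2:ℝ)/a = (a/2)⁻¹ by field_simp]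
          exact inv_anti₀ (by linarith) (by linarith)
        calc η * (a - η)⁻¹ ≤ η * (2/a) :=
              mul_le_mul_of_nonneg_left h5 (le_of_lt hη0)
          _ ≤ (ε * a / 8) * (2/a) := by
              refine mul_le_mul_of_nonneg_right hηε (by positivity)
          _ = ε/4 := by field_simp; ring
      linarith
    have hp3 : (∫ y in a..(1:ℝ), Gp y) = 1 := by
      have : EqOn Gp (fun y => 1/y) (uIcc a 1) := by
        intro y hy
        rw [uIcc_of_le (le_of_lt ha1)] at hy
        exact hGp_eq y hy.1
      rw [intervalIntegral.integral_congr this,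
        integral_one_div (by
          intro h
          rw [uIcc_of_le (le_of_lt ha1)] at h
          exact absurd h.1 (not_le.2 ha0)),
        show (1:ℝ)/a = a⁻¹ by rw [one_div], Real.log_inv, haloga]
      norm_num
    rw [hsplit, hp1, hp3]
    linarith
  -- integral of Gm
  have hIGm : 1 - ε/2 ≤ ∫ y in (0:ℝ)..1, Gm y := by
    have hint1 : IntervalIntegrable Gm volume 0 a := hGmc.intervalIntegrable _ _
    have hint2 : IntervalIntegrable Gm volume a (a + η) := hGmc.intervalIntegrable _ _
    have hint3 : IntervalIntegrable Gm volume (a + η) 1 := hGmc.intervalIntegrable _ _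
    have hsplit : (∫ y in (0:ℝ)..1, Gm y)
        = (∫ y in (0:ℝ)..a, Gm y) + (∫ y in a..(a+η), Gm y) + ∫ y in (a+η)..(1:ℝ), Gm y := by
      rw [intervalIntegral.integral_add_adjacent_intervals hint1 hint2,
        intervalIntegral.integral_add_adjacent_intervals (hint1.trans hint2) hint3]
    have hp1 : (∫ y in (0:ℝ)..a, Gm y) = 0 := by
      have : EqOn Gm (fun _ => (0:ℝ)) (uIcc 0 a) := by
        intro y hy
        rw [uIcc_of_le (le_of_lt ha0)] at hy
        exact hGm_eq0 y hy.2
      rw [intervalIntegral.integral_congr this, intervalIntegral.integral_zero]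
    have hp2 : (0:ℝ) ≤ ∫ y in a..(a+η), Gm y := by
      refine intervalIntegral.integral_nonneg (by linarith) ?_
      intro y hy
      refine mul_nonneg (le_min zero_le_one (le_max_left _ _)) ?_
      have : (0:ℝ) < max y a := lt_of_lt_of_le ha0 (le_max_right _ _)
      positivity
    have hp3 : 1 - ε/8 ≤ ∫ y in (a+η)..(1:ℝ), Gm y := by
      have heq : (∫ y in (a+η)..(1:ℝ), Gm y) = Real.log (1/(a+η)) := by
        have : EqOn Gm (fun y => 1/y) (uIcc (a+η) 1) := by
          intro y hy
          rw [uIcc_of_le haη1] at hy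
          exact hGm_eq y hy.1
        rw [intervalIntegral.integral_congr this,
          integral_one_div (by
            intro h
            rw [uIcc_of_le haη1] at h
            have := h.1
            linarith)]
      rw [heq, one_div, Real.log_inv]
      have hlog : Real.log (a + η) ≤ -1 + ε/8 := by
        have h1 : Real.log (a + η) - Real.log a = Real.log ((a+η)/a) := by
          rw [Real.log_div (by linarith) (ne_of_gt ha0)]
        have h2 : Real.log ((a+η)/a) ≤ (a+η)/a - 1 :=
          Real.log_le_sub_one_of_pos (by positivity)
        have h3 : (a+η)/a - 1 = η/a := by rw [div_sub_one (ne_of_gt ha0)]; ring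
        have h4 : η/a ≤ ε/8 := by
          rw [div_le_iff₀ ha0]
          calc η ≤ ε * a / 8 := hηε
            _ = ε/8 * a := by ring
        rw [haloga] at h1
        linarith
      linarith
    rw [hsplit, hp1]
    linarith
  -- Weierstrass approximations
  obtain ⟨pu, hpu⟩ := exists_polynomial_near_of_continuousOn 0 1 (fun y => Gp y + ε')
    ((hGpc.add continuous_const).continuousOn) ε' hε'0
  obtain ⟨pl, hpl⟩ := exists_polynomial_near_of_continuousOn 0 1 (fun y => Gm y - ε')
    ((hGmc.sub continuous_const).continuousOn) ε' hε'0
  refine ⟨pl, pu, ?_, ?_, ?_, ?_⟩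
  · intro y hy
    have h1 := hpl y hy
    rw [abs_lt] at h1
    have h2 := hGm_le y hy
    have : Polynomial.eval y pl ≤ Gm y := by linarith [h1.2]
    exact le_trans this h2
  · intro y hy
    have h1 := hpu y hy
    rw [abs_lt] at h1
    have h2 := hGp_ge y hy
    have : Gp y ≤ Polynomial.eval y pu := by linarith [h1.1]
    exact le_trans h2 this
  · have hmono : (∫ y in (0:ℝ)..1, Polynomial.eval y pu) ≤ ∫ y in (0:ℝ)..1, Gp y + 2*ε' := by
      refine intervalIntegral.integral_mono_on zero_le_one
        ((Polynomial.continuous pu).intervalIntegrable _ _)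
        ((hGpc.add continuous_const).intervalIntegrable _ _) ?_
      intro y hy
      have h1 := hpu y hy
      rw [abs_lt] at h1
      linarith [h1.2]
    have hadd : (∫ y in (0:ℝ)..1, Gp y + 2*ε')
        = (∫ y in (0:ℝ)..1, Gp y) + 2*ε' := by
      rw [intervalIntegral.integral_add (hGpc.intervalIntegrable _ _) intervalIntegrable_const,
        intervalIntegral.integral_const, smul_eq_mul]
      ring
    rw [hadd] at hmono
    have : 2*ε' = ε/2 := by rw [hε']; ring
    linarith
  · have hmono : (∫ y in (0:ℝ)..1, Gm y - 2*ε') ≤ ∫ y in (0:ℝ)..1, Polynomial.eval y pl := by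
      refine intervalIntegral.integral_mono_on zero_le_one
        ((hGmc.sub continuous_const).intervalIntegrable _ _)
        ((Polynomial.continuous pl).intervalIntegrable _ _) ?_
      intro y hy
      have h1 := hpl y hy
      rw [abs_lt] at h1
      linarith [h1.1]
    have hsub : (∫ y in (0:ℝ)..1, Gm y - 2*ε')
        = (∫ y in (0:ℝ)..1, Gm y) - 2*ε' := by
      rw [intervalIntegral.integral_sub (hGmc.intervalIntegrable _ _) intervalIntegrable_const,
        intervalIntegral.integral_const, smul_eq_mul]
      ring
    rw [hsub] at hmono
    have : 2*ε' = ε/2 := by rw [hε']; ring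
    linarith

section Taub
variable {Δ : ℝ → ℝ} (hmeas : Measurable Δ) (hnonneg : ∀ x : ℝ, 0 ≤ Δ x)
  {C X : ℝ} (hC : ∀ x : ℝ, 0 < x → Δ x ≤ C) (hX : 0 < X)
  (hvan : ∀ x : ℝ, X ≤ x → Δ x = 0)
include hmeas hnonneg hC hX hvan

theorem aux_tauberian {v : ℝ} (hv : 0 ≤ v)
    (hA : Tendsto (fun t => t * ∫ x in Ioi (0:ℝ), Real.exp (-(t*x)) * Δ x) atTop (nhds v)) :
    Tendsto (fun x => (∫ u in Ioc (0:ℝ) x, Δ u) / x) (nhdsWithin (0:ℝ) (Ioi 0)) (nhds v) := by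
  set Df : ℝ → ℝ := fun x => ∫ u in Ioc (0:ℝ) x, Δ u with hDf
  have hintc : ∀ c : ℝ, 0 ≤ c →
      IntegrableOn (fun x => Real.exp (-(c*x)) * Δ x) (Ioi (0:ℝ)) := by
    intro c hc
    refine aux_int_mul hmeas hnonneg hC hX hvan _ ((measurable_id.const_mul c).neg.exp) ?_
    intro x hx
    rw [abs_of_nonneg (Real.exp_nonneg _)]
    refine Real.exp_le_one_iff.2 ?_
    have hx0 : (0:ℝ) < x := hx
    nlinarith
  have hscaled : ∀ k : ℕ, Tendsto (fun t => t * ∫ x in Ioi (0:ℝ),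
      Real.exp (-(((k:ℝ)+1) * t * x)) * Δ x) atTop (nhds (v / ((k:ℝ)+1))) := by
    intro k
    set c : ℝ := (k:ℝ)+1 with hc
    have hc0 : (0:ℝ) < c := by positivity
    have h1 : Tendsto (fun t : ℝ => c * t) atTop atTop :=
      Tendsto.const_mul_atTop hc0 tendsto_id
    have h2 := (hA.comp h1).div_const c
    refine h2.congr fun t => ?_
    simp only [Function.comp_apply]
    have hcne : c ≠ 0 := ne_of_gt hc0
    field_simp
  have hIp : ∀ (p : Polynomial ℝ) (t : ℝ), 0 ≤ t →
      IntegrableOn (fun x => Polynomial.eval (Real.exp (-(t*x))) p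
        * (Real.exp (-(t*x)) * Δ x)) (Ioi (0:ℝ)) ∧
      (∫ x in Ioi (0:ℝ), Polynomial.eval (Real.exp (-(t*x))) p * (Real.exp (-(t*x)) * Δ x))
        = ∑ k ∈ Finset.range (p.natDegree + 1),
            p.coeff k * ∫ x in Ioi (0:ℝ), Real.exp (-(((k:ℝ)+1) * t * x)) * Δ x := by
    intro p t ht
    have hpw : ∀ x : ℝ, Polynomial.eval (Real.exp (-(t*x))) p * (Real.exp (-(t*x)) * Δ x)
        = ∑ k ∈ Finset.range (p.natDegree + 1),
            p.coeff k * (Real.exp (-(((k:ℝ)+1) * t * x)) * Δ x) := by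
      intro x
      rw [Polynomial.eval_eq_sum_range, Finset.sum_mul]
      refine Finset.sum_congr rfl fun k _ => ?_
      have he : Real.exp (-(t*x)) ^ k * Real.exp (-(t*x))
          = Real.exp (-(((k:ℝ)+1) * t * x)) := by
        rw [← Real.exp_nat_mul, ← Real.exp_add]
        congr 1
        ring
      calc p.coeff k * Real.exp (-(t*x)) ^ k * (Real.exp (-(t*x)) * Δ x)
          = p.coeff k * ((Real.exp (-(t*x)) ^ k * Real.exp (-(t*x))) * Δ x) := by ring
        _ = p.coeff k * (Real.exp (-(((k:ℝ)+1) * t * x)) * Δ x) := by rw [he]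
    have hterm : ∀ k : ℕ, IntegrableOn
        (fun x => p.coeff k * (Real.exp (-(((k:ℝ)+1) * t * x)) * Δ x)) (Ioi (0:ℝ)) := by
      intro k
      have h1 : IntegrableOn (fun x => Real.exp (-((((k:ℝ)+1) * t) * x)) * Δ x) (Ioi (0:ℝ)) :=
        hintc (((k:ℝ)+1) * t) (by positivity)
      exact h1.const_mul (p.coeff k)
    constructor
    · have hsumint : IntegrableOn (fun x => ∑ k ∈ Finset.range (p.natDegree+1),
          p.coeff k * (Real.exp (-(((k:ℝ)+1) * t * x)) * Δ x)) (Ioi (0:ℝ)) :=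
        integrable_finset_sum _ (fun k _ => hterm k)
      exact hsumint.congr (ae_of_all _ fun x => (hpw x).symm)
    · rw [MeasureTheory.integral_congr_ae (ae_of_all _ hpw),
        integral_finset_sum _ (fun k _ => hterm k)]
      exact Finset.sum_congr rfl fun k _ => MeasureTheory.integral_const_mul _ _
  have hpoly : ∀ p : Polynomial ℝ,
      Tendsto (fun t => t * ∫ x in Ioi (0:ℝ), Polynomial.eval (Real.exp (-(t*x))) p
        * (Real.exp (-(t*x)) * Δ x)) atTop
        (nhds (v * ∫ y in (0:ℝ)..1, Polynomial.eval y p)) := by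
    intro p
    have hval : (v * ∫ y in (0:ℝ)..1, Polynomial.eval y p)
        = ∑ k ∈ Finset.range (p.natDegree + 1), p.coeff k * (v / ((k:ℝ)+1)) := by
      have h1 : (∫ y in (0:ℝ)..1, Polynomial.eval y p)
          = ∑ k ∈ Finset.range (p.natDegree + 1), p.coeff k * (1/((k:ℝ)+1)) := by
        have h2 : EqOn (fun y : ℝ => Polynomial.eval y p)
            (fun y : ℝ => ∑ k ∈ Finset.range (p.natDegree+1), p.coeff k * y ^ k)
            (Set.uIcc (0:ℝ) 1) := fun y _ => Polynomial.eval_eq_sum_range _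
        rw [intervalIntegral.integral_congr h2]
        rw [intervalIntegral.integral_finset_sum
            (fun k _ => ((by fun_prop : Continuous fun x : ℝ => p.coeff k * x ^ k).intervalIntegrable _ _))]
        refine Finset.sum_congr rfl fun k _ => ?_
        rw [intervalIntegral.integral_const_mul, integral_pow]
        norm_num
      rw [h1, Finset.mul_sum]
      exact Finset.sum_congr rfl fun k _ => by ring
    rw [hval]
    have hsum : Tendsto (fun t => ∑ k ∈ Finset.range (p.natDegree+1),
        p.coeff k * (t * ∫ x in Ioi (0:ℝ), Real.exp (-(((k:ℝ)+1) * t * x)) * Δ x)) atTop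
        (nhds (∑ k ∈ Finset.range (p.natDegree+1), p.coeff k * (v / ((k:ℝ)+1)))) :=
      tendsto_finset_sum _ (fun k _ => (hscaled k).const_mul _)
    refine hsum.congr' ?_
    filter_upwards [eventually_ge_atTop (0:ℝ)] with t ht
    rw [(hIp p t ht).2, Finset.mul_sum]
    exact Finset.sum_congr rfl fun k _ => by ring
  -- middle quantity
  have hIind : ∀ s : ℝ, IntegrableOn ((Ioc (0:ℝ) s).indicator Δ) (Ioi (0:ℝ)) := by
    intro s
    have h1 := aux_int_mul hmeas hnonneg hC hX hvan ((Ioc (0:ℝ) s).indicator (fun _ => 1))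
      (measurable_const.indicator measurableSet_Ioc) (by
        intro x _
        by_cases hm : x ∈ Ioc (0:ℝ) s
        · rw [Set.indicator_of_mem hm]; norm_num
        · rw [Set.indicator_of_notMem hm]; norm_num)
    refine h1.congr_fun (fun x _ => ?_) measurableSet_Ioi
    beta_reduce
    by_cases hm : x ∈ Ioc (0:ℝ) s
    · rw [Set.indicator_of_mem hm, Set.indicator_of_mem hm, one_mul]
    · rw [Set.indicator_of_notMem hm, Set.indicator_of_notMem hm, zero_mul]
  have hcomp_low : ∀ (p : Polynomial ℝ),
      (∀ y ∈ Icc (0:ℝ) 1, Polynomial.eval y p ≤ (if Real.exp (-1) ≤ y then 1/y else 0)) →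
      ∀ t : ℝ, 0 < t →
      t * (∫ x in Ioi (0:ℝ), Polynomial.eval (Real.exp (-(t*x))) p
        * (Real.exp (-(t*x)) * Δ x)) ≤ t * Df (1/t) := by
    intro p hple t ht
    refine mul_le_mul_of_nonneg_left ?_ (le_of_lt ht)
    have hmid : Df (1/t) = ∫ x in Ioi (0:ℝ), (Ioc (0:ℝ) (1/t)).indicator Δ x :=
      aux_D_indicator (Δ := Δ) (1/t)
    rw [hmid]
    refine setIntegral_mono_on (hIp p t (le_of_lt ht)).1 (hIind (1/t)) measurableSet_Ioi ?_
    intro x hx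
    have hx0 : (0:ℝ) < x := hx
    set y : ℝ := Real.exp (-(t*x)) with hy
    have hy0 : 0 < y := Real.exp_pos _
    have hy1 : y ≤ 1 := Real.exp_le_one_iff.2 (by nlinarith)
    have hple' := hple y ⟨le_of_lt hy0, hy1⟩
    by_cases hx1 : x ≤ 1/t
    · have hay : Real.exp (-1) ≤ y := by
        rw [hy]
        refine Real.exp_le_exp.2 ?_
        rw [le_div_iff₀ ht] at hx1
        nlinarith
      rw [if_pos hay] at hple'
      rw [Set.indicator_of_mem (show x ∈ Ioc (0:ℝ) (1/t) from ⟨hx0, hx1⟩)]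
      calc Polynomial.eval y p * (y * Δ x) ≤ (1/y) * (y * Δ x) :=
            mul_le_mul_of_nonneg_right hple' (mul_nonneg (le_of_lt hy0) (hnonneg x))
        _ = Δ x := by field_simp
    · have hay : y < Real.exp (-1) := by
        rw [hy]
        refine Real.exp_lt_exp.2 ?_
        rw [not_le, div_lt_iff₀ ht] at hx1
        nlinarith
      rw [if_neg (not_le.2 hay)] at hple'
      rw [Set.indicator_of_notMem (show x ∉ Ioc (0:ℝ) (1/t) from fun h => ?_)]
      · exact mul_nonpos_of_nonpos_of_nonneg hple'
          (mul_nonneg (le_of_lt hy0) (hnonneg x))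
      · rw [not_le, div_lt_iff₀ ht] at hx1
        have := h.2
        rw [le_div_iff₀ ht] at this
        nlinarith
  have hcomp_up : ∀ (p : Polynomial ℝ),
      (∀ y ∈ Icc (0:ℝ) 1, (if Real.exp (-1) ≤ y then 1/y else 0) ≤ Polynomial.eval y p) →
      ∀ t : ℝ, 0 < t →
      t * Df (1/t) ≤ t * (∫ x in Ioi (0:ℝ), Polynomial.eval (Real.exp (-(t*x))) p
        * (Real.exp (-(t*x)) * Δ x)) := by
    intro p hpge t ht
    refine mul_le_mul_of_nonneg_left ?_ (le_of_lt ht)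
    have hmid : Df (1/t) = ∫ x in Ioi (0:ℝ), (Ioc (0:ℝ) (1/t)).indicator Δ x :=
      aux_D_indicator (Δ := Δ) (1/t)
    rw [hmid]
    refine setIntegral_mono_on (hIind (1/t)) (hIp p t (le_of_lt ht)).1 measurableSet_Ioi ?_
    intro x hx
    have hx0 : (0:ℝ) < x := hx
    set y : ℝ := Real.exp (-(t*x)) with hy
    have hy0 : 0 < y := Real.exp_pos _
    have hy1 : y ≤ 1 := Real.exp_le_one_iff.2 (by nlinarith)
    have hpge' := hpge y ⟨le_of_lt hy0, hy1⟩
    by_cases hx1 : x ≤ 1/t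
    · have hay : Real.exp (-1) ≤ y := by
        rw [hy]
        refine Real.exp_le_exp.2 ?_
        rw [le_div_iff₀ ht] at hx1
        nlinarith
      rw [if_pos hay] at hpge'
      rw [Set.indicator_of_mem (show x ∈ Ioc (0:ℝ) (1/t) from ⟨hx0, hx1⟩)]
      calc Δ x = (1/y) * (y * Δ x) := by field_simp
        _ ≤ Polynomial.eval y p * (y * Δ x) :=
            mul_le_mul_of_nonneg_right hpge' (mul_nonneg (le_of_lt hy0) (hnonneg x))
    · have hay : y < Real.exp (-1) := by
        rw [hy]
        refine Real.exp_lt_exp.2 ?_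
        rw [not_le, div_lt_iff₀ ht] at hx1
        nlinarith
      rw [if_neg (not_le.2 hay)] at hpge'
      rw [Set.indicator_of_notMem (show x ∉ Ioc (0:ℝ) (1/t) from fun h => ?_)]
      · exact mul_nonneg hpge' (mul_nonneg (le_of_lt hy0) (hnonneg x))
      · rw [not_le, div_lt_iff₀ ht] at hx1
        have := h.2
        rw [le_div_iff₀ ht] at this
        nlinarith
  -- conclude for t * Df (1/t)
  have hW : Tendsto (fun t : ℝ => t * Df (1/t)) atTop (nhds v) := by
    refine tendsto_order.2 ⟨?_, ?_⟩
    · intro b hb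
      set ε0 : ℝ := (v - b) / (v + 1) with hε0
      have hε0pos : 0 < ε0 := div_pos (by linarith) (by linarith)
      obtain ⟨pl, pu, hpl, hpu, hIu, hIl⟩ := sandwich_polys hε0pos
      have hlim := hpoly pl
      have hgt : b < v * ∫ y in (0:ℝ)..1, Polynomial.eval y pl := by
        have h1 : v * (1 - ε0) ≤ v * ∫ y in (0:ℝ)..1, Polynomial.eval y pl :=
          mul_le_mul_of_nonneg_left hIl hv
        have h2 : b < v * (1 - ε0) := by
          have h3 : v * ε0 < v - b := by
            rw [hε0]
            rw [mul_div_assoc']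
            rw [div_lt_iff₀ (by linarith : (0:ℝ) < v + 1)]
            nlinarith
          nlinarith
        linarith
      filter_upwards [hlim.eventually_const_lt hgt, eventually_gt_atTop (0:ℝ)] with t h1 h2
      exact lt_of_lt_of_le h1 (hcomp_low pl hpl t h2)
    · intro b hb
      set ε0 : ℝ := (b - v) / (v + 1) with hε0
      have hε0pos : 0 < ε0 := div_pos (by linarith) (by linarith)
      obtain ⟨pl, pu, hpl, hpu, hIu, hIl⟩ := sandwich_polys hε0pos
      have hlim := hpoly pu
      have hlt : (v * ∫ y in (0:ℝ)..1, Polynomial.eval y pu) < b := by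
        have h1 : v * ∫ y in (0:ℝ)..1, Polynomial.eval y pu ≤ v * (1 + ε0) :=
          mul_le_mul_of_nonneg_left hIu hv
        have h2 : v * (1 + ε0) < b := by
          have h3 : v * ε0 < b - v := by
            rw [hε0]
            rw [mul_div_assoc']
            rw [div_lt_iff₀ (by linarith : (0:ℝ) < v + 1)]
            nlinarith
          nlinarith
        linarith
      filter_upwards [hlim.eventually_lt_const hlt, eventually_gt_atTop (0:ℝ)] with t h1 h2
      exact lt_of_le_of_lt (hcomp_up pu hpu t h2) h1
  -- transfer to x → 0+
  have h1 := hW.comp (tendsto_inv_nhdsGT_zero (𝕜 := ℝ))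
  refine h1.congr' ?_
  filter_upwards [self_mem_nhdsWithin] with x hx
  have hx0 : (0:ℝ) < x := hx
  simp only [Function.comp_apply]
  rw [one_div, inv_inv, div_eq_inv_mul]

end Taub

theorem stmt16 (Δ : ℝ → ℝ) (hmeas : Measurable Δ) (hnonneg : ∀ x : ℝ, 0 ≤ Δ x)
    (hbdd : ∃ C : ℝ, ∀ x : ℝ, 0 < x → Δ x ≤ C)
    (hvanish : ∃ X : ℝ, 0 < X ∧ ∀ x : ℝ, X ≤ x → Δ x = 0)
    (V : ℝ → ℝ) (hV : ∀ t : ℝ, V t = t * ∫ x in Set.Ioi (0 : ℝ), Real.exp (-(t * x)) * Δ x)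
    (D : ℝ → ℝ) (hD : ∀ x : ℝ, D x = ∫ u in Set.Ioc (0 : ℝ) x, Δ u)
    (v : ℝ) (hv : 0 ≤ v) :
    Tendsto V atTop (nhds v) ↔
      Tendsto (fun x : ℝ => D x / x) (nhdsWithin (0 : ℝ) (Set.Ioi (0 : ℝ))) (nhds v) := by
  obtain ⟨C, hC⟩ := hbdd
  obtain ⟨X, hX0, hvanX⟩ := hvanish
  constructor
  · intro h
    have hA : Tendsto (fun t => t * ∫ x in Ioi (0:ℝ), Real.exp (-(t*x)) * Δ x)
        atTop (nhds v) := (tendsto_congr hV).1 h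
    have h2 := aux_tauberian hmeas hnonneg hC hX0 hvanX hv hA
    exact (tendsto_congr fun x => by rw [hD]).2 h2
  · intro h
    have hB : Tendsto (fun x => (∫ u in Ioc (0:ℝ) x, Δ u) / x)
        (nhdsWithin (0:ℝ) (Ioi 0)) (nhds v) :=
      (tendsto_congr fun x => by rw [hD]).1 h
    have h2 := aux_abelian hmeas hnonneg hC hX0 hvanX hB
    exact (tendsto_congr hV).2 h2
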